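/- Let φ: ℝ → ℝ be a convex function that is non-smooth at 0, with maximal subgradient ∂_max φ(0) and minimal subgradient ∂_min φ(0) at 0. Then for every τ ≥ 0 and every affine function l(α) = c·α + b, we have ∫_{-τ}^{τ} |φ(α) - l(α)| dα ≥ τ² (∂_max φ(0) - ∂_min φ(0)) / 8. -/

import Mathlib

/-- The subdifferential of `φ : ℝ → ℝ` at `x`. -/
def subgrad (φ : ℝ → ℝ) (x : ℝ) : Set ℝ :=
  {g : ℝ | ∀ y : ℝ, φ x + g * (y - x) ≤ φ y}

/-- Pointwise step: for a convex function with subgradient `d` at `0`,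
`φ (α + t) - φ α ≥ d * t` for `α, t ≥ 0`. -/
lemma step_lemma (φ : ℝ → ℝ) (hφ : ConvexOn ℝ Set.univ φ)
    (d : ℝ) (hd : d ∈ subgrad φ 0) {α t : ℝ} (hα : 0 ≤ α) (ht : 0 ≤ t) :
    φ α + d * t ≤ φ (α + t) := by
  rcases eq_or_lt_of_le (by linarith : (0:ℝ) ≤ α + t) with h | h
  · have hα0 : α = 0 := by linarith
    have ht0 : t = 0 := by linarith
    simp [hα0, ht0]
  · have hsub := hd (α + t)
    simp only [sub_zero] at hsub
    have hcvx := hφ.2 (Set.mem_univ (0:ℝ)) (Set.mem_univ (α + t))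
      (show (0:ℝ) ≤ t / (α + t) by positivity)
      (show (0:ℝ) ≤ α / (α + t) by positivity)
      (show t / (α + t) + α / (α + t) = 1 by field_simp; ring)
    have hx : (t / (α + t)) • (0:ℝ) + (α / (α + t)) • (α + t) = α := by
      simp only [smul_eq_mul, mul_zero, zero_add]; exact div_mul_cancel₀ _ h.ne'
    rw [hx] at hcvx
    simp only [smul_eq_mul] at hcvx
    have h1 : φ α ≤ t / (α + t) * φ 0 + α / (α + t) * φ (α + t) := hcvx
    have h2 : φ 0 + d * (α + t) ≤ φ (α + t) := hsub
    have ht' : t / (α + t) * (φ 0 + d * (α + t)) ≤ t / (α + t) * φ (α + t) := by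
      apply mul_le_mul_of_nonneg_left h2 (by positivity)
    have he : t / (α + t) * (d * (α + t)) = d * t := by field_simp
    have hsum : t / (α + t) + α / (α + t) = 1 := by field_simp; ring
    have hsum' : t / (α + t) * φ (α + t) + α / (α + t) * φ (α + t) = φ (α + t) := by
      linear_combination (φ (α + t)) * hsum
    linarith [h1, ht', he, hsum']

/-- Integral step: for a continuous convex function with subgradient `d` at `0`,
`∫_t^{2t} ψ - ∫_0^t ψ ≥ d t²`. -/
lemma key_lemma (ψ : ℝ → ℝ) (hψ : ConvexOn ℝ Set.univ ψ) (hc : Continuous ψ)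
    (d : ℝ) (hd : d ∈ subgrad ψ 0) {t : ℝ} (ht : 0 ≤ t) :
    d * t ^ 2 ≤ (∫ α in t..(2*t), ψ α) - ∫ α in (0:ℝ)..t, ψ α := by
  have hshift : (∫ α in (0:ℝ)..t, ψ (α + t)) = ∫ α in t..(2*t), ψ α := by
    have := intervalIntegral.integral_comp_add_right (a := (0:ℝ)) (b := t) (f := ψ) t
    rw [this]; norm_num; ring_nf
  rw [← hshift]
  have hint1 : IntervalIntegrable (fun α => ψ (α + t)) MeasureTheory.volume 0 t :=
    (hc.comp (continuous_id.add continuous_const)).intervalIntegrable 0 t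
  have hint2 : IntervalIntegrable ψ MeasureTheory.volume 0 t :=
    hc.intervalIntegrable 0 t
  have hmono : (∫ α in (0:ℝ)..t, (ψ α + d * t)) ≤ ∫ α in (0:ℝ)..t, ψ (α + t) := by
    apply intervalIntegral.integral_mono_on ht (hint2.add intervalIntegrable_const) hint1
    intro x hx
    exact step_lemma ψ hψ d hd hx.1 ht
  have heq : (∫ α in (0:ℝ)..t, (ψ α + d * t)) = (∫ α in (0:ℝ)..t, ψ α) + t * (d * t) := by
    rw [intervalIntegral.integral_add hint2 intervalIntegrable_const,
      intervalIntegral.integral_const]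
    simp
  rw [heq] at hmono
  nlinarith [hmono]

/-- Non-smooth convex function vs affine function, integral form. -/
theorem stmt_0 (φ : ℝ → ℝ) (hφ : ConvexOn ℝ Set.univ φ)
    (dmax dmin : ℝ)
    (hmax : IsGreatest (subgrad φ 0) dmax)
    (hmin : IsLeast (subgrad φ 0) dmin)
    (hns : dmin < dmax)
    (τ : ℝ) (hτ : 0 ≤ τ) (c b : ℝ) :
    τ ^ 2 * (dmax - dmin) / 8 ≤ ∫ α in (-τ)..τ, |φ α - (c * α + b)| := by
  -- continuity of φ
  have hcφ : Continuous φ :=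
    continuousOn_univ.mp (hφ.continuousOn isOpen_univ)
  set f : ℝ → ℝ := fun α => φ α - (c * α + b) with hf
  have hcf : Continuous f := by
    apply hcφ.sub
    exact (continuous_const.mul continuous_id).add continuous_const
  -- f is convex
  have hfconv : ConvexOn ℝ Set.univ f := by
    refine ⟨convex_univ, ?_⟩
    intro x _ y _ a b' ha hb' hab
    have := hφ.2 (Set.mem_univ x) (Set.mem_univ y) ha hb' hab
    simp only [smul_eq_mul, hf] at this ⊢
    have hz : c * (a * x + b' * y) + b = a * (c * x + b) + b' * (c * y + b) := by
      linear_combination (-b) * hab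
    linarith [this, hz.le, hz.ge]
  -- g α = f (-α) is convex
  set g : ℝ → ℝ := fun α => f (-α) with hg
  have hcg : Continuous g := hcf.comp continuous_neg
  have hgconv : ConvexOn ℝ Set.univ g := by
    refine ⟨convex_univ, ?_⟩
    intro x _ y _ a b' ha hb' hab
    have := hfconv.2 (Set.mem_univ (-x)) (Set.mem_univ (-y)) ha hb' hab
    simp only [smul_eq_mul, hg] at this ⊢
    have hx : a * -x + b' * -y = -(a * x + b' * y) := by ring
    rw [hx] at this
    exact this
  -- subgradients
  have hdf : (dmax - c) ∈ subgrad f 0 := by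
    intro y
    have := hmax.1 y
    simp only [sub_zero] at this ⊢
    simp only [hf]
    nlinarith [this]
  have hdg : (c - dmin) ∈ subgrad g 0 := by
    intro y
    have := hmin.1 (-y)
    simp only [sub_zero] at this ⊢
    simp only [hg, hf]
    rw [mul_neg] at this
    simp only [neg_zero]
    nlinarith [this]
  set t : ℝ := τ / 2 with htdef
  have ht : 0 ≤ t := by positivity
  have h2t : 2 * t = τ := by rw [htdef]; ring
  -- key estimates
  have k1 := key_lemma f hfconv hcf (dmax - c) hdf ht
  have k2 := key_lemma g hgconv hcg (c - dmin) hdg ht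
  rw [h2t] at k1 k2
  -- rewrite integrals of g as integrals of f
  have hg1 : (∫ α in t..τ, g α) = ∫ α in (-τ)..(-t), f α := by
    simpa [hg] using intervalIntegral.integral_comp_neg (a := t) (b := τ) (f := f)
  have hg2 : (∫ α in (0:ℝ)..t, g α) = ∫ α in (-t)..(0:ℝ), f α := by
    simpa [hg] using intervalIntegral.integral_comp_neg (a := (0:ℝ)) (b := t) (f := f)
  rw [hg1, hg2] at k2
  -- split the integral of |f|
  have hintf : ∀ u v : ℝ, IntervalIntegrable f MeasureTheory.volume u v :=
    fun u v => hcf.intervalIntegrable u v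
  have hintaf : ∀ u v : ℝ, IntervalIntegrable (fun α => |f α|) MeasureTheory.volume u v :=
    fun u v => hcf.abs.intervalIntegrable u v
  have hsplit : (∫ α in (-τ)..τ, |f α|) =
      (∫ α in (-τ)..(-t), |f α|) + (∫ α in (-t)..(0:ℝ), |f α|) +
      (∫ α in (0:ℝ)..t, |f α|) + (∫ α in t..τ, |f α|) := by
    rw [intervalIntegral.integral_add_adjacent_intervals (hintaf (-τ) (-t)) (hintaf (-t) 0),
      intervalIntegral.integral_add_adjacent_intervals (hintaf (-τ) 0) (hintaf 0 t),
      intervalIntegral.integral_add_adjacent_intervals (hintaf (-τ) t) (hintaf t τ)]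
  -- |∫ f| ≤ ∫ |f| on each piece
  have habs : ∀ u v : ℝ, u ≤ v → |∫ α in u..v, f α| ≤ ∫ α in u..v, |f α| :=
    fun u v huv => intervalIntegral.abs_integral_le_integral_abs huv
  have e1 := habs (-τ) (-t) (by linarith)
  have e2 := habs (-t) 0 (by linarith)
  have e3 := habs 0 t ht
  have e4 := habs t τ (by linarith)
  have hgoal : (∫ α in (-τ)..τ, |φ α - (c * α + b)|) = ∫ α in (-τ)..τ, |f α| := rfl
  rw [hgoal, hsplit]
  have a1 := (abs_le.mp (le_refl |∫ α in (-τ)..(-t), f α|)).2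
  have habs1 : (∫ α in (-τ)..(-t), f α) ≤ ∫ α in (-τ)..(-t), |f α| :=
    (le_abs_self _).trans e1
  have habs2 : -(∫ α in (-t)..(0:ℝ), f α) ≤ ∫ α in (-t)..(0:ℝ), |f α| :=
    (neg_le_abs _).trans e2
  have habs3 : -(∫ α in (0:ℝ)..t, f α) ≤ ∫ α in (0:ℝ)..t, |f α| :=
    (neg_le_abs _).trans e3
  have habs4 : (∫ α in t..τ, f α) ≤ ∫ α in t..τ, |f α| :=
    (le_abs_self _).trans e4
  have ht2 : t ^ 2 = τ ^ 2 / 4 := by rw [htdef]; ring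
  rw [ht2] at k1 k2
  nlinarith [habs1, habs2, habs3, habs4, k1, k2, sq_nonneg τ, hns]
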